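/- arXiv:math/0504213 — 3 statements merged into one kernel-verified Lean document; each statement's English description precedes it below -/
import Mathlib

section
/- Let Γ be a totally ordered abelian group and K the field of fractions of ℝ[Γ]. Define O := {x ∈ K : γ_x ≥ 0} where each nonzero x ∈ K is uniquely written as x = r_x e^{γ_x} f/g with r_x ∈ ℝ \ {0}, γ_x ∈ Γ, and f, g ∈ 1 + (span of e^γ with γ > 0). Then O is a valuation ring of K: it is a subring such that for every nonzero x ∈ K, x ∈ O or x⁻¹ ∈ O. -/
open scoped Classical

/-- The multiplicatively closed set `I_{>0}` of elements of `ℝ[Γ]` of the form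
`1 + (ℝ-linear combination of e^γ with γ > 0)`. -/
def Ipos (Γ : Type*) [AddCommGroup Γ] [LinearOrder Γ] [IsOrderedAddMonoid Γ] : Set (AddMonoidAlgebra ℝ Γ) :=
  {f | ∃ h : AddMonoidAlgebra ℝ Γ, f = 1 + h ∧ ∀ γ ∈ h.coeff.support, 0 < γ}

/-- `x ∈ K` has the normal form `x = r · e^γ · f / g` with `f, g ∈ I_{>0}`. -/
def hasVal (Γ : Type*) [AddCommGroup Γ] [LinearOrder Γ] [IsOrderedAddMonoid Γ]
    (x : FractionRing (AddMonoidAlgebra ℝ Γ)) (r : ℝ) (γ : Γ) : Prop :=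
  ∃ f ∈ Ipos Γ, ∃ g ∈ Ipos Γ,
    x * algebraMap (AddMonoidAlgebra ℝ Γ) (FractionRing (AddMonoidAlgebra ℝ Γ)) g =
      algebraMap (AddMonoidAlgebra ℝ Γ) (FractionRing (AddMonoidAlgebra ℝ Γ))
        (r • AddMonoidAlgebra.single γ (1 : ℝ) * f)

/-- `O = {x ∈ K : γ_x ≥ 0}` (with the convention that `0 ∈ O`). -/
def valO (Γ : Type*) [AddCommGroup Γ] [LinearOrder Γ] [IsOrderedAddMonoid Γ] :
    Set (FractionRing (AddMonoidAlgebra ℝ Γ)) :=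
  {x | x = 0 ∨ ∃ r : ℝ, ∃ γ : Γ, hasVal Γ x r γ ∧ 0 ≤ γ}

namespace ValAux

variable {Γ : Type*} [AddCommGroup Γ] [LinearOrder Γ] [IsOrderedAddMonoid Γ]

local notation "R" => AddMonoidAlgebra ℝ Γ
local notation "K" => FractionRing (AddMonoidAlgebra ℝ Γ)
local notation "ι" => algebraMap (AddMonoidAlgebra ℝ Γ) (FractionRing (AddMonoidAlgebra ℝ Γ))

theorem one_mem_Ipos : (1 : R) ∈ Ipos Γ := ⟨0, by simp, by simp⟩

theorem Ipos_support_nonneg {f : R} (hf : f ∈ Ipos Γ) : ∀ δ ∈ f.coeff.support, 0 ≤ δ := by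
  obtain ⟨h, rfl, hh⟩ := hf
  intro δ hδ
  rw [AddMonoidAlgebra.coeff_add] at hδ
  rcases Finset.mem_union.mp (Finsupp.support_add hδ) with h1 | h1
  · have : δ ∈ ({0} : Finset Γ) := by
      have := Finsupp.support_single_subset (a := (0:Γ)) (b := (1:ℝ))
      rw [AddMonoidAlgebra.one_def] at h1
      exact this h1
    simp at this; simp [this]
  · exact (hh δ h1).le

theorem Ipos_coeff_zero {f : R} (hf : f ∈ Ipos Γ) : f.coeff 0 = 1 := by
  obtain ⟨h, rfl, hh⟩ := hf
  have h0 : h.coeff 0 = 0 := by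
    by_contra hc
    exact lt_irrefl (0:Γ) (hh 0 (Finsupp.mem_support_iff.mpr hc))
  have : ((1 : R) + h).coeff 0 = (1 : R).coeff 0 + h.coeff 0 := rfl
  rw [this, h0, AddMonoidAlgebra.one_def, add_zero, AddMonoidAlgebra.coeff_single, Finsupp.single_eq_same]

theorem Ipos_ne_zero {f : R} (hf : f ∈ Ipos Γ) : f ≠ 0 := by
  intro h
  have := Ipos_coeff_zero hf
  rw [h] at this
  simp at this

theorem Ipos_mul {f g : R} (hf : f ∈ Ipos Γ) (hg : g ∈ Ipos Γ) : f * g ∈ Ipos Γ := by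
  obtain ⟨h, rfl, hh⟩ := hf
  obtain ⟨h', rfl, hh'⟩ := hg
  refine ⟨h + h' + h * h', by ring, ?_⟩
  intro γ hγ
  rw [AddMonoidAlgebra.coeff_add, AddMonoidAlgebra.coeff_add] at hγ
  rcases Finset.mem_union.mp (Finsupp.support_add hγ) with h1 | h1
  · rcases Finset.mem_union.mp (Finsupp.support_add h1) with h2 | h2
    · exact hh γ h2
    · exact hh' γ h2
  · obtain ⟨a, ha, b, hb, rfl⟩ := Finset.mem_add.mp (AddMonoidAlgebra.support_coeff_mul_subset h h' h1)
    exact add_pos (hh a ha) (hh' b hb)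

theorem smul_single_mul (r s : ℝ) (γ δ : Γ) (f g : R) :
    (r • AddMonoidAlgebra.single γ (1:ℝ) * f) * (s • AddMonoidAlgebra.single δ (1:ℝ) * g) =
      (r * s) • AddMonoidAlgebra.single (γ + δ) (1:ℝ) * (f * g) := by
  simp only [smul_mul_assoc, mul_smul_comm, smul_smul]
  rw [mul_mul_mul_comm, AddMonoidAlgebra.single_mul_single, one_mul, mul_comm s r]

/-- Decomposition of a nonzero element of `ℝ[Γ]` into normal form. -/
theorem exists_decomp {p : R} (hp : p ≠ 0) :
    ∃ r : ℝ, ∃ γ : Γ, r ≠ 0 ∧ γ ∈ p.coeff.support ∧ (∀ δ ∈ p.coeff.support, γ ≤ δ) ∧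
      ∃ f ∈ Ipos Γ, p = r • AddMonoidAlgebra.single γ (1:ℝ) * f := by
  have hs : p.coeff.support.Nonempty := Finsupp.support_nonempty_iff.mpr (mt AddMonoidAlgebra.coeff_eq_zero.mp hp)
  set γ := p.coeff.support.min' hs with hγdef
  have hγ : γ ∈ p.coeff.support := p.coeff.support.min'_mem hs
  have hr : p.coeff γ ≠ 0 := Finsupp.mem_support_iff.mp hγ
  set r := p.coeff γ with hrdef
  set f : R := r⁻¹ • (AddMonoidAlgebra.single (-γ) (1:ℝ) * p) with hfdef
  have hfc : ∀ δ : Γ, f.coeff δ = r⁻¹ * p.coeff (γ + δ) := by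
    intro δ
    rw [hfdef]
    have : (AddMonoidAlgebra.single (-γ) (1:ℝ) * p).coeff δ = 1 * p.coeff (-(-γ) + δ) :=
      AddMonoidAlgebra.coeff_single_mul_apply p 1 (-γ) δ
    rw [AddMonoidAlgebra.coeff_smul_apply, this, neg_neg, one_mul, smul_eq_mul]
  have hf0 : f.coeff 0 = 1 := by rw [hfc, add_zero, ← hrdef, inv_mul_cancel₀ hr]
  have hfI : f ∈ Ipos Γ := by
    refine ⟨f - 1, by ring, ?_⟩
    intro δ hδ
    have hδ0 : (f - 1).coeff δ ≠ 0 := Finsupp.mem_support_iff.mp hδ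
    have hsub : (f - 1).coeff δ = f.coeff δ - (1 : R).coeff δ := rfl
    by_cases hδz : δ = 0
    · exfalso
      apply hδ0
      rw [hsub, hδz, hf0, AddMonoidAlgebra.one_def, AddMonoidAlgebra.coeff_single, Finsupp.single_eq_same]
      ring
    · have h1δ : (1 : R).coeff δ = 0 := by
        rw [AddMonoidAlgebra.one_def, AddMonoidAlgebra.coeff_single, Finsupp.single_apply, if_neg (fun h => hδz h.symm)]
      have hfδ : f.coeff δ ≠ 0 := by
        intro h; apply hδ0; rw [hsub, h, h1δ]; ring
      have hpδ : p.coeff (γ + δ) ≠ 0 := by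
        intro h; apply hfδ; rw [hfc, h, mul_zero]
      have : γ ≤ γ + δ := p.coeff.support.min'_le _ (Finsupp.mem_support_iff.mpr hpδ)
      have h0δ : 0 ≤ δ := (le_add_iff_nonneg_right γ).mp this
      exact lt_of_le_of_ne h0δ (fun h => hδz h.symm)
  refine ⟨r, γ, hr, hγ, fun δ hδ => p.coeff.support.min'_le δ hδ, f, hfI, ?_⟩
  rw [hfdef, smul_mul_assoc, mul_smul_comm, smul_smul, mul_inv_cancel₀ hr, one_smul,
    ← mul_assoc, AddMonoidAlgebra.single_mul_single, add_neg_cancel, one_mul,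
    ← AddMonoidAlgebra.one_def, one_mul]

theorem hasVal_of_eq {x : K} {p q : R} {r₁ r₂ : ℝ} {γ₁ γ₂ : Γ} {f₁ f₂ : R}
    (hf₁ : f₁ ∈ Ipos Γ) (hf₂ : f₂ ∈ Ipos Γ) (hr₂ : r₂ ≠ 0)
    (hp : p = r₁ • AddMonoidAlgebra.single γ₁ (1:ℝ) * f₁)
    (hq : q = r₂ • AddMonoidAlgebra.single γ₂ (1:ℝ) * f₂)
    (h : x * ι q = ι p) :
    hasVal Γ x (r₁ / r₂) (γ₁ - γ₂) := by
  refine ⟨f₁, hf₁, f₂, hf₂, ?_⟩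
  set c : R := r₂⁻¹ • AddMonoidAlgebra.single (-γ₂) (1:ℝ) * 1 with hc
  have key : q * c = f₂ := by
    rw [hq, hc, smul_single_mul, mul_inv_cancel₀ hr₂, add_neg_cancel, one_smul,
      ← AddMonoidAlgebra.one_def, one_mul, mul_one]
  have key2 : p * c = (r₁ / r₂) • AddMonoidAlgebra.single (γ₁ - γ₂) (1:ℝ) * f₁ := by
    rw [hp, hc, smul_single_mul, mul_one, div_eq_mul_inv, sub_eq_add_neg]
  have : x * ι f₂ = (x * ι q) * ι c := by
    rw [← key, map_mul]; ring
  rw [this, h, ← map_mul, key2]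

theorem hasVal_mul {x y : K} {r s : ℝ} {γ δ : Γ}
    (hx : hasVal Γ x r γ) (hy : hasVal Γ y s δ) : hasVal Γ (x * y) (r * s) (γ + δ) := by
  obtain ⟨f₁, hf₁, g₁, hg₁, h₁⟩ := hx
  obtain ⟨f₂, hf₂, g₂, hg₂, h₂⟩ := hy
  refine ⟨f₁ * f₂, Ipos_mul hf₁ hf₂, g₁ * g₂, Ipos_mul hg₁ hg₂, ?_⟩
  have : x * y * ι (g₁ * g₂) = (x * ι g₁) * (y * ι g₂) := by
    rw [map_mul]; ring
  rw [this, h₁, h₂, ← map_mul, smul_single_mul]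

theorem hasVal_neg {x : K} {r : ℝ} {γ : Γ}
    (hx : hasVal Γ x r γ) : hasVal Γ (-x) (-r) γ := by
  obtain ⟨f, hf, g, hg, h⟩ := hx
  refine ⟨f, hf, g, hg, ?_⟩
  rw [show (-x) * (algebraMap (AddMonoidAlgebra ℝ Γ) (FractionRing (AddMonoidAlgebra ℝ Γ))) g = -(x * (algebraMap (AddMonoidAlgebra ℝ Γ) (FractionRing (AddMonoidAlgebra ℝ Γ))) g) from neg_mul x _, h, ← map_neg, ← neg_mul, ← neg_smul]

theorem support_nonneg_mul {p q : R} (hp : ∀ μ ∈ p.coeff.support, 0 ≤ μ)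
    (hq : ∀ μ ∈ q.coeff.support, 0 ≤ μ) : ∀ μ ∈ (p * q).coeff.support, 0 ≤ μ := by
  intro μ hμ
  obtain ⟨a, ha, b, hb, rfl⟩ := Finset.mem_add.mp (AddMonoidAlgebra.support_coeff_mul_subset p q hμ)
  exact add_nonneg (hp a ha) (hq b hb)

theorem support_term {r : ℝ} {γ : Γ} {f : R} (hf : ∀ μ ∈ f.coeff.support, 0 ≤ μ) (hγ : 0 ≤ γ) :
    ∀ μ ∈ (r • AddMonoidAlgebra.single γ (1:ℝ) * f).coeff.support, 0 ≤ μ := by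
  apply support_nonneg_mul _ hf
  intro μ hμ
  have h1 : μ ∈ (AddMonoidAlgebra.single γ (1:ℝ)).coeff.support := by
    rw [AddMonoidAlgebra.coeff_smul] at hμ; exact Finsupp.support_smul hμ
  have := Finsupp.support_single_subset (by rwa [AddMonoidAlgebra.coeff_single] at h1)
  simp only [Finset.mem_singleton] at this
  rw [this]; exact hγ

end ValAux

open ValAux in
/-- `O` is a valuation ring in `K`: it is a subring of `K` such that for
every nonzero `x ∈ K` either `x ∈ O` or `x⁻¹ ∈ O`. -/
theorem valO_is_valuation_ring (Γ : Type*) [AddCommGroup Γ] [LinearOrder Γ] [IsOrderedAddMonoid Γ] :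
    ∃ S : Subring (FractionRing (AddMonoidAlgebra ℝ Γ)),
      (S : Set (FractionRing (AddMonoidAlgebra ℝ Γ))) = valO Γ ∧
      ∀ x : FractionRing (AddMonoidAlgebra ℝ Γ), x ≠ 0 → x ∈ S ∨ x⁻¹ ∈ S := by
  set R := AddMonoidAlgebra ℝ Γ
  set K := FractionRing (AddMonoidAlgebra ℝ Γ)
  set ι := algebraMap (AddMonoidAlgebra ℝ Γ) (FractionRing (AddMonoidAlgebra ℝ Γ)) with hι
  have hinj : Function.Injective ι := IsFractionRing.injective _ _
  have hιne : ∀ {a : R}, a ≠ 0 → ι a ≠ 0 := by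
    intro a ha h
    exact ha (hinj (h.trans (map_zero ι).symm))
  have hone : (1 : K) ∈ valO Γ := by
    refine Or.inr ⟨1, 0, ⟨1, one_mem_Ipos, 1, one_mem_Ipos, ?_⟩, le_refl 0⟩
    rw [one_smul, ← AddMonoidAlgebra.one_def, one_mul, mul_one]
  have hmul : ∀ {x y : K}, x ∈ valO Γ → y ∈ valO Γ → x * y ∈ valO Γ := by
    rintro x y (rfl | ⟨r, γ, hx, hγ⟩) hy
    · exact Or.inl (zero_mul _)
    rcases hy with rfl | ⟨s, δ, hy, hδ⟩
    · exact Or.inl (mul_zero _)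
    exact Or.inr ⟨r * s, γ + δ, hasVal_mul hx hy, add_nonneg hγ hδ⟩
  have hneg : ∀ {x : K}, x ∈ valO Γ → -x ∈ valO Γ := by
    rintro x (rfl | ⟨r, γ, hx, hγ⟩)
    · exact Or.inl neg_zero
    · exact Or.inr ⟨-r, γ, hasVal_neg hx, hγ⟩
  have hadd : ∀ {x y : K}, x ∈ valO Γ → y ∈ valO Γ → x + y ∈ valO Γ := by
    rintro x y (rfl | ⟨r, γ, ⟨f₁, hf₁, g₁, hg₁, h₁⟩, hγ⟩) hy
    · rw [zero_add]; exact hy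
    rcases hy with rfl | ⟨s, δ, ⟨f₂, hf₂, g₂, hg₂, h₂⟩, hδ⟩
    · rw [add_zero]; exact Or.inr ⟨r, γ, ⟨f₁, hf₁, g₁, hg₁, h₁⟩, hγ⟩
    set P : R := r • AddMonoidAlgebra.single γ (1:ℝ) * f₁ * g₂ +
        s • AddMonoidAlgebra.single δ (1:ℝ) * f₂ * g₁ with hPdef
    have hP : (x + y) * ι (g₁ * g₂) = ι P := by
      have : (x + y) * ι (g₁ * g₂) = (x * ι g₁) * ι g₂ + (y * ι g₂) * ι g₁ := by
        rw [map_mul]; ring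
      rw [this, h₁, h₂, ← map_mul, ← map_mul, ← map_add]
    have hsupp : ∀ μ ∈ P.coeff.support, 0 ≤ μ := by
      intro μ hμ
      rw [AddMonoidAlgebra.coeff_add] at hμ
      rcases Finset.mem_union.mp (Finsupp.support_add hμ) with h1 | h1
      · exact support_nonneg_mul (support_term (Ipos_support_nonneg hf₁) hγ)
          (Ipos_support_nonneg hg₂) μ h1
      · exact support_nonneg_mul (support_term (Ipos_support_nonneg hf₂) hδ)
          (Ipos_support_nonneg hg₁) μ h1
    by_cases hP0 : P = 0
    · left
      have := hP
      rw [hP0, map_zero] at this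
      rcases mul_eq_zero.mp this with h | h
      · exact h
      · exact absurd h (hιne (Ipos_ne_zero (Ipos_mul hg₁ hg₂)))
    · obtain ⟨r', γ', hr', hγ'mem, _, f', hf', hPe⟩ := exists_decomp hP0
      refine Or.inr ⟨r', γ', ⟨f', hf', g₁ * g₂, Ipos_mul hg₁ hg₂, ?_⟩, hsupp γ' hγ'mem⟩
      rw [hP, hPe]
  refine ⟨{ carrier := valO Γ,
            one_mem' := hone,
            mul_mem' := hmul,
            zero_mem' := Or.inl rfl,
            add_mem' := hadd,
            neg_mem' := hneg }, rfl, ?_⟩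
  intro x hx
  obtain ⟨⟨p, q⟩, h⟩ := IsLocalization.surj (nonZeroDivisors R) x
  simp only at h
  have hq0 : (q : R) ≠ 0 := nonZeroDivisors.coe_ne_zero q
  have hp0 : p ≠ 0 := by
    intro h'
    rw [h', map_zero] at h
    rcases mul_eq_zero.mp h with h'' | h''
    · exact hx h''
    · exact hιne hq0 h''
  obtain ⟨r₁, γ₁, hr₁, _, _, f₁, hf₁, hpe⟩ := exists_decomp hp0
  obtain ⟨r₂, γ₂, hr₂, _, _, f₂, hf₂, hqe⟩ := exists_decomp hq0
  rcases le_total γ₂ γ₁ with hle | hle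
  · exact Or.inl (Or.inr ⟨r₁ / r₂, γ₁ - γ₂, hasVal_of_eq hf₁ hf₂ hr₂ hpe hqe h,
      sub_nonneg.mpr hle⟩)
  · have h' : x⁻¹ * ι p = ι (q : R) := by
      rw [← h, ← mul_assoc, inv_mul_cancel₀ hx, one_mul]
    exact Or.inr (Or.inr ⟨r₂ / r₁, γ₂ - γ₁, hasVal_of_eq hf₂ hf₁ hr₁ hqe hpe h',
      sub_nonneg.mpr hle⟩)
end

section
/- Applying the Robinson–Schensted correspondence to the longest element σ_{ν*} of the Young subgroup S_{ν*} of S_n yields a pair of tableaux whose common shape is ν. -/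
/-- Row insertion: insert `x` into a row, bumping the leftmost entry larger than `x`. -/
def insRow : List ℕ → ℕ → List ℕ × Option ℕ
  | [], x => ([x], none)
  | a :: as, x =>
    if x < a then (x :: as, some a)
    else
      match insRow as x with
      | (r, b) => (a :: r, b)

/-- Robinson–Schensted insertion of `x` into a tableau (list of rows). -/
def insTab : List (List ℕ) → ℕ → List (List ℕ)
  | [], x => [[x]]
  | r :: rs, x =>
    match insRow r x with
    | (r', none) => r' :: rs
    | (r', some b) => r' :: insTab rs b

/-- Shape of a tableau: the list of row lengths. -/
def shape (t : List (List ℕ)) : List ℕ := t.map List.length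

/-- Index of the first position where two lists differ (here: the row where the shape grew). -/
def diffIdx : List ℕ → List ℕ → ℕ
  | [], _ => 0
  | _ :: _, [] => 0
  | a :: as, b :: bs => if a = b then diffIdx as bs + 1 else 0

/-- Append entry `k` at the end of row `i` of a tableau (creating a new row if needed). -/
def addAt : List (List ℕ) → ℕ → ℕ → List (List ℕ)
  | [], _, k => [[k]]
  | r :: rs, 0, k => (r ++ [k]) :: rs
  | r :: rs, i + 1, k => r :: addAt rs i k

/-- The Robinson–Schensted pair `(P(w), Q(w))` of a word `w` (entries inserted in order,
with `Q` recording the order in which the boxes are created, by `1, 2, 3, …`). -/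
def RSpair (w : List ℕ) : List (List ℕ) × List (List ℕ) :=
  (w.zip (List.range w.length)).foldl
    (fun PQ xk =>
      let P' := insTab PQ.1 xk.1
      (P', addAt PQ.2 (diffIdx (shape PQ.1) (shape P')) (xk.2 + 1)))
    ([], [])

/-- The insertion tableau `P(w)`. -/
def RSP (w : List ℕ) : List (List ℕ) := (RSpair w).1

/-- The recording tableau `Q(w)`. -/
def RSQ (w : List ℕ) : List (List ℕ) := (RSpair w).2

/-- The conjugate of a partition given as a (weakly decreasing) list. -/
def conjL (ν : List ℕ) : List ℕ :=
  (List.range (ν.foldr max 0)).map fun i => ν.countP fun p => decide (i + 1 ≤ p)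

/-- The word (one-line notation) of the longest element of the Young subgroup with block
sizes `μ`, acting on `{1, …, n}`: each consecutive block is reversed. -/
def blockRevWord : List ℕ → ℕ → List ℕ
  | [], _ => []
  | m :: ms, off => ((List.range m).reverse.map fun j => off + j + 1) ++ blockRevWord ms (off + m)
/-! ### Auxiliary machinery -/

/-- The RS step function (same as the fold body of `RSpair`). -/
def rsStep (PQ : List (List ℕ) × List (List ℕ)) (xk : ℕ × ℕ) :
    List (List ℕ) × List (List ℕ) :=
  let P' := insTab PQ.1 xk.1
  (P', addAt PQ.2 (diffIdx (shape PQ.1) (shape P')) (xk.2 + 1))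

/-- Append the values `a, a+1, a+2, …` at the ends of rows `0, 1, …, t-1`. -/
def diagApp : List (List ℕ) → ℕ → ℕ → List (List ℕ)
  | T, _, 0 => T
  | [], a, t + 1 => [a] :: diagApp [] (a + 1) t
  | r :: rs, a, t + 1 => (r ++ [a]) :: diagApp rs (a + 1) t

/-- Effect of `diagApp` on shapes: add 1 to the first `t` row lengths (padding with 1's). -/
def shapeD : List ℕ → ℕ → List ℕ
  | s, 0 => s
  | [], t + 1 => 1 :: shapeD [] t
  | l :: ls, t + 1 => (l + 1) :: shapeD ls t

/-- The result of inserting all the blocks. -/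
def appendCols : List (List ℕ) → ℕ → List ℕ → List (List ℕ)
  | T, _, [] => T
  | T, off, c :: cs => appendCols (diagApp T (off + 1) c) (off + c) cs

/-- Pointwise sum, keeping the tail of the longer list. -/
def ov : List ℕ → List ℕ → List ℕ
  | b, [] => b
  | [], s => s
  | x :: b, y :: s => (x + y) :: ov b s

/-- Remove one box from every column: decrement all parts, dropping the 1's. -/
def decP (ν : List ℕ) : List ℕ := (ν.filter fun p => 2 ≤ p).map (· - 1)

@[simp] lemma diagApp_zero (T : List (List ℕ)) (a : ℕ) : diagApp T a 0 = T := by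
  cases T <;> rfl

@[simp] lemma shapeD_zero (s : List ℕ) : shapeD s 0 = s := by
  cases s <;> rfl

@[simp] lemma ov_nil_right : ∀ b : List ℕ, ov b [] = b := by
  intro b; cases b <;> rfl

lemma insRow_all_lt {r : List ℕ} {a : ℕ} (h : ∀ x ∈ r, x < a) :
    insRow r a = (r ++ [a], none) := by
  induction r with
  | nil => rfl
  | cons y ys ih =>
    have hy : y ≤ a := (h y (by simp)).le
    show insRow (y :: ys) a = _
    rw [insRow, if_neg (by omega : ¬ a < y), ih (fun x hx => h x (by simp [hx]))]
    rfl

lemma insRow_append {r : List ℕ} {a b : ℕ} (h : ∀ x ∈ r, x < a) (hab : a < b) :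
    insRow (r ++ [b]) a = (r ++ [a], some b) := by
  induction r with
  | nil => simp [insRow, hab]
  | cons y ys ih =>
    have hy : y ≤ a := (h y (by simp)).le
    show insRow (y :: (ys ++ [b])) a = _
    rw [insRow, if_neg (by omega : ¬ a < y), ih (fun x hx => h x (by simp [hx]))]
    rfl

lemma insTab_diag : ∀ (t : ℕ) (T : List (List ℕ)) (a : ℕ),
    (∀ r ∈ T, ∀ x ∈ r, x < a) →
    insTab (diagApp T (a + 1) t) a = diagApp T a (t + 1) := by
  intro t
  induction t with
  | zero =>
    intro T a h
    rw [diagApp_zero]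
    match T with
    | [] => rfl
    | r :: rs =>
      show insTab (r :: rs) a = (r ++ [a]) :: diagApp rs (a + 1) 0
      rw [diagApp_zero]
      simp only [insTab]
      rw [insRow_all_lt (fun x hx => h r (by simp) x hx)]
  | succ t ih =>
    intro T a h
    match T with
    | [] =>
      show insTab ([a + 1] :: diagApp [] (a + 1 + 1) t) a = [a] :: diagApp [] (a + 1) (t + 1)
      have h1 : insRow [a + 1] a = ([a], some (a + 1)) := by
        simp [insRow, Nat.lt_succ_self]
      show (match insRow [a + 1] a with
        | (r', none) => r' :: diagApp [] (a + 1 + 1) t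
        | (r', some b) => r' :: insTab (diagApp [] (a + 1 + 1) t) b)
        = [a] :: diagApp [] (a + 1) (t + 1)
      rw [h1]
      show [a] :: insTab (diagApp [] (a + 1 + 1) t) (a + 1) = _
      rw [ih [] (a + 1) (by simp)]
    | r :: rs =>
      show insTab ((r ++ [a + 1]) :: diagApp rs (a + 1 + 1) t) a
          = (r ++ [a]) :: diagApp rs (a + 1) (t + 1)
      have h1 : insRow (r ++ [a + 1]) a = (r ++ [a], some (a + 1)) :=
        insRow_append (fun x hx => h r (by simp) x hx) (Nat.lt_succ_self a)
      show (match insRow (r ++ [a + 1]) a with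
        | (r', none) => r' :: diagApp rs (a + 1 + 1) t
        | (r', some b) => r' :: insTab (diagApp rs (a + 1 + 1) t) b)
        = (r ++ [a]) :: diagApp rs (a + 1) (t + 1)
      rw [h1]
      show (r ++ [a]) :: insTab (diagApp rs (a + 1 + 1) t) (a + 1) = _
      rw [ih rs (a + 1) (fun rr hrr x hx => Nat.lt_succ_of_lt (h rr (by simp [hrr]) x hx))]

lemma shape_diag : ∀ (t : ℕ) (T : List (List ℕ)) (a : ℕ),
    shape (diagApp T a t) = shapeD (shape T) t := by
  intro t
  induction t with
  | zero => intro T a; simp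
  | succ t ih =>
    intro T a
    match T with
    | [] =>
      show shape ([a] :: diagApp [] (a+1) t) = shapeD (shape []) (t+1)
      show 1 :: shape (diagApp [] (a+1) t) = 1 :: shapeD (shape []) t
      rw [ih [] (a+1)]
    | r :: rs =>
      show shape ((r ++ [a]) :: diagApp rs (a+1) t) = (r.length + 1) :: shapeD (shape rs) t
      show (r ++ [a]).length :: shape (diagApp rs (a+1) t) = _
      rw [ih rs (a+1)]
      simp

lemma diffIdx_shapeD : ∀ (t : ℕ) (s : List ℕ),
    diffIdx (shapeD s t) (shapeD s (t + 1)) = t := by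
  intro t
  induction t with
  | zero =>
    intro s
    match s with
    | [] => rfl
    | l :: ls =>
      show diffIdx (l :: ls) ((l + 1) :: shapeD ls 0) = 0
      simp [diffIdx]
  | succ t ih =>
    intro s
    match s with
    | [] =>
      show diffIdx (1 :: shapeD [] t) (1 :: shapeD [] (t+1)) = t + 1
      simp [diffIdx, ih []]
    | l :: ls =>
      show diffIdx ((l+1) :: shapeD ls t) ((l+1) :: shapeD ls (t+1)) = t + 1
      simp [diffIdx, ih ls]

lemma addAt_diag : ∀ (t : ℕ) (T : List (List ℕ)) (b : ℕ),
    addAt (diagApp T b t) t (b + t) = diagApp T b (t + 1) := by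
  intro t
  induction t with
  | zero =>
    intro T b
    rw [diagApp_zero]
    match T with
    | [] => rfl
    | r :: rs =>
      show (r ++ [b + 0]) :: rs = (r ++ [b]) :: diagApp rs (b + 1) 0
      simp
  | succ t ih =>
    intro t' b
    match t' with
    | [] =>
      show addAt ([b] :: diagApp [] (b+1) t) (t+1) (b + (t+1)) = [b] :: diagApp [] (b+1) (t+1)
      show [b] :: addAt (diagApp [] (b+1) t) t (b + (t+1)) = [b] :: diagApp [] (b+1) (t+1)
      rw [show b + (t + 1) = (b + 1) + t by ring, ih []]
    | r :: rs =>
      show addAt ((r ++ [b]) :: diagApp rs (b+1) t) (t+1) (b + (t+1))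
          = (r ++ [b]) :: diagApp rs (b+1) (t+1)
      show (r ++ [b]) :: addAt (diagApp rs (b+1) t) t (b + (t+1)) = _
      rw [show b + (t + 1) = (b + 1) + t by ring, ih rs]

lemma diag_entries_le : ∀ (t : ℕ) (T : List (List ℕ)) (a b : ℕ),
    (∀ r ∈ T, ∀ x ∈ r, x ≤ b) → a + t ≤ b + 1 →
    ∀ r ∈ diagApp T a t, ∀ x ∈ r, x ≤ b := by
  intro t
  induction t with
  | zero => intro T a b hT _; simpa using hT
  | succ t ih =>
    intro T a b hT hab
    match T with
    | [] =>
      intro r hr x hx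
      rw [show diagApp [] a (t+1) = [a] :: diagApp [] (a+1) t from rfl] at hr
      rcases List.mem_cons.mp hr with rfl | hr
      · simp at hx; omega
      · exact ih [] (a+1) b (by simp) (by omega) r hr x hx
    | rr :: rs =>
      intro r hr x hx
      rw [show diagApp (rr :: rs) a (t+1) = (rr ++ [a]) :: diagApp rs (a+1) t from rfl] at hr
      rcases List.mem_cons.mp hr with rfl | hr
      · rcases List.mem_append.1 hx with h | h
        · exact hT rr (by simp) x h
        · simp at h; omega
      · exact ih rs (a+1) b (fun r' hr' => hT r' (by simp [hr'])) (by omega) r hr x hx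
lemma range'_split : ∀ (m s n : ℕ), List.range' s (m + n) = List.range' s m ++ List.range' (s + m) n := by
  intro m
  induction m with
  | zero => intro s n; simp
  | succ m ih =>
    intro s n
    rw [show m + 1 + n = (m + n) + 1 by ring]
    simp only [List.range'_succ]
    rw [ih (s+1) n, show s + 1 + m = s + (m + 1) by ring]
    simp

lemma innerFold : ∀ (u t off : ℕ) (T : List (List ℕ)),
    (∀ r ∈ T, ∀ x ∈ r, x ≤ off) →
    List.foldl rsStep (diagApp T (off + u + 1) t, diagApp T (off + 1) t)
      (List.zip ((List.range u).reverse.map fun j => off + j + 1) (List.range' (off + t) u))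
    = (diagApp T (off + 1) (t + u), diagApp T (off + 1) (t + u)) := by
  intro u
  induction u with
  | zero => intro t off T hT; simp
  | succ u ih =>
    intro t off T hT
    have hword : (List.range (u+1)).reverse.map (fun j => off + j + 1)
        = (off + u + 1) :: ((List.range u).reverse.map fun j => off + j + 1) := by
      rw [List.range_succ]
      simp
    rw [hword, List.range'_succ]
    simp only [List.zip_cons_cons, List.foldl_cons]
    have hstep : rsStep (diagApp T (off + (u+1) + 1) t, diagApp T (off + 1) t) (off + u + 1, off + t)
        = (diagApp T (off + u + 1) (t + 1), diagApp T (off + 1) (t + 1)) := by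
      have hlt : ∀ r ∈ T, ∀ x ∈ r, x < off + u + 1 := by
        intro r hr x hx; have := hT r hr x hx; omega
      have h1 : insTab (diagApp T (off + (u+1) + 1) t) (off + u + 1)
          = diagApp T (off + u + 1) (t + 1) := by
        rw [show off + (u+1) + 1 = (off + u + 1) + 1 by ring]
        exact insTab_diag t T (off + u + 1) hlt
      unfold rsStep
      simp only [h1]
      rw [shape_diag, shape_diag, diffIdx_shapeD]
      rw [show off + t + 1 = (off + 1) + t by ring, addAt_diag]
    rw [hstep]
    have := ih (t + 1) off T hT
    rw [show off + t + 1 = off + (t + 1) by ring]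
    rw [this, show t + 1 + u = t + (u + 1) by ring]

lemma blockRevWord_length : ∀ (cs : List ℕ) (off : ℕ),
    (blockRevWord cs off).length = cs.sum := by
  intro cs
  induction cs with
  | nil => intro off; rfl
  | cons c cs ih => intro off; simp [blockRevWord, ih]

lemma outerFold : ∀ (cs : List ℕ) (off : ℕ) (T : List (List ℕ)),
    (∀ r ∈ T, ∀ x ∈ r, x ≤ off) →
    List.foldl rsStep (T, T)
      (List.zip (blockRevWord cs off) (List.range' off (blockRevWord cs off).length))
    = (appendCols T off cs, appendCols T off cs) := by
  intro cs
  induction cs with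
  | nil => intro off T hT; simp [blockRevWord, appendCols]
  | cons c cs ih =>
    intro off T hT
    have hlen : ((List.range c).reverse.map fun j => off + j + 1).length = c := by simp
    rw [show blockRevWord (c :: cs) off
        = ((List.range c).reverse.map fun j => off + j + 1) ++ blockRevWord cs (off + c) from rfl]
    rw [List.length_append, hlen, range'_split c off _, List.zip_append (by simp [hlen]),
      List.foldl_append]
    have h1 := innerFold c 0 off T hT
    simp only [diagApp, Nat.add_zero, Nat.zero_add] at h1
    rw [h1]
    have h2 : ∀ r ∈ diagApp T (off + 1) c, ∀ x ∈ r, x ≤ off + c :=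
      diag_entries_le c T (off + 1) (off + c) (fun r hr x hx => (hT r hr x hx).trans (by omega))
        (by omega)
    have := ih (off + c) (diagApp T (off + 1) c) h2
    rw [show appendCols T off (c :: cs) = appendCols (diagApp T (off+1) c) (off + c) cs from rfl]
    exact this

lemma shape_appendCols : ∀ (cs : List ℕ) (T : List (List ℕ)) (off : ℕ),
    shape (appendCols T off cs) = List.foldl shapeD (shape T) cs := by
  intro cs
  induction cs with
  | nil => intro T off; rfl
  | cons c cs ih =>
    intro T off
    show shape (appendCols (diagApp T (off+1) c) (off + c) cs) = _
    rw [ih, shape_diag, List.foldl_cons]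

lemma shapeD_length : ∀ (t : ℕ) (s : List ℕ), (shapeD s t).length = max s.length t := by
  intro t
  induction t with
  | zero => intro s; simp [shapeD]
  | succ t ih =>
    intro s
    match s with
    | [] => show (1 :: shapeD [] t).length = _ ; simp [ih []]
    | l :: ls => show ((l+1) :: shapeD ls t).length = _ ; simp [ih ls]

lemma shapeD_ov : ∀ (c : ℕ) (b s : List ℕ), c ≤ b.length → s.length ≤ b.length →
    shapeD (ov b s) c = ov b (shapeD s c) := by
  intro c
  induction c with
  | zero => intro b s _ _; simp
  | succ c ih =>
    intro b s hc hs
    match b, s with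
    | x :: b', [] =>
      show shapeD (x :: b') (c+1) = ov (x :: b') (1 :: shapeD [] c)
      show (x + 1) :: shapeD b' c = (x + 1) :: ov b' (shapeD [] c)
      have h := ih b' [] (by simpa using hc) (by simp)
      rw [ov_nil_right] at h
      rw [h]
    | x :: b', y :: s' =>
      show shapeD ((x + y) :: ov b' s') (c+1) = ov (x :: b') ((y+1) :: shapeD s' c)
      show (x + y + 1) :: shapeD (ov b' s') c = (x + (y+1)) :: ov b' (shapeD s' c)
      rw [← ih b' s' (by simpa using hc) (by simpa using hs)]
      congr 1

lemma foldl_shapeD_ov : ∀ (cs : List ℕ) (b s : List ℕ), (∀ x ∈ cs, x ≤ b.length) →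
    s.length ≤ b.length →
    List.foldl shapeD (ov b s) cs = ov b (List.foldl shapeD s cs) := by
  intro cs
  induction cs with
  | nil => intro b s _ _; rfl
  | cons c cs ih =>
    intro b s hc hs
    rw [List.foldl_cons, List.foldl_cons, shapeD_ov c b s (hc c (by simp)) hs,
      ih b (shapeD s c) (fun x hx => hc x (by simp [hx])) (by rw [shapeD_length]; simp; exact ⟨hs, hc c (by simp)⟩)]

lemma shapeD_nil_eq : ∀ t : ℕ, shapeD [] t = List.replicate t 1 := by
  intro t
  induction t with
  | zero => rfl
  | succ t ih => show 1 :: shapeD [] t = _; rw [ih]; rfl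
lemma mem_le_foldr_max : ∀ (l : List ℕ) (p : ℕ), p ∈ l → p ≤ l.foldr max 0 := by
  intro l
  induction l with
  | nil => intro p h; simp at h
  | cons a l ih =>
    intro p h
    rcases List.mem_cons.mp h with h | h
    · subst h; exact le_max_left _ _
    · exact (ih p h).trans (le_max_right _ _)

lemma decP_cons_of_le {p : ℕ} (rest : List ℕ) (h : 2 ≤ p) :
    decP (p :: rest) = (p - 1) :: decP rest := by
  simp [decP, List.filter_cons, h]

lemma decP_cons_of_lt {p : ℕ} (rest : List ℕ) (h : p < 2) :
    decP (p :: rest) = decP rest := by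
  simp [decP, List.filter_cons, Nat.not_le.mpr h]

lemma decP_sum_le : ∀ ν : List ℕ, (decP ν).sum ≤ ν.sum := by
  intro ν
  induction ν with
  | nil => simp [decP]
  | cons p rest ih =>
    by_cases h : 2 ≤ p
    · rw [decP_cons_of_le rest h]; simp; omega
    · rw [decP_cons_of_lt rest (by omega)]; simp; omega

lemma decP_sum_lt (p : ℕ) (rest : List ℕ) (hp : 0 < p) :
    (decP (p :: rest)).sum < (p :: rest).sum := by
  have := decP_sum_le rest
  by_cases h : 2 ≤ p
  · rw [decP_cons_of_le rest h]; simp; omega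
  · rw [decP_cons_of_lt rest (by omega)]; simp; omega

lemma decP_max : ∀ ν : List ℕ, (decP ν).foldr max 0 = ν.foldr max 0 - 1 := by
  intro ν
  induction ν with
  | nil => simp [decP]
  | cons p rest ih =>
    by_cases h : 2 ≤ p
    · rw [decP_cons_of_le rest h]
      simp only [List.foldr_cons, ih]
      rcases Nat.le_total p (rest.foldr max 0) with h' | h' <;>
        rcases Nat.le_total (p-1) (rest.foldr max 0 - 1) with h'' | h'' <;>
        simp [Nat.max_eq_right, Nat.max_eq_left, h', h''] <;> omega
    · rw [decP_cons_of_lt rest (by omega)]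
      simp only [List.foldr_cons, ih]
      rcases Nat.le_total p (rest.foldr max 0) with h' | h' <;>
        simp [Nat.max_eq_right, Nat.max_eq_left, h'] <;> omega

lemma decP_countP (i : ℕ) (ν : List ℕ) :
    (decP ν).countP (fun p => decide (i + 1 ≤ p)) = ν.countP (fun p => decide (i + 2 ≤ p)) := by
  rw [decP, List.countP_map, List.countP_filter]
  refine List.countP_congr ?_
  intro a _
  simp only [Function.comp_apply, Bool.and_eq_true, decide_eq_true_eq]
  omega

lemma conjL_cons (ν : List ℕ) (hne : ν ≠ []) (hpos : ∀ p ∈ ν, 0 < p) :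
    conjL ν = ν.length :: conjL (decP ν) := by
  have hM : 1 ≤ ν.foldr max 0 := by
    match ν, hne with
    | p :: rest, _ =>
      have := hpos p (by simp)
      have := mem_le_foldr_max (p :: rest) p (by simp)
      omega
  obtain ⟨M', hM'⟩ : ∃ M', ν.foldr max 0 = M' + 1 := ⟨ν.foldr max 0 - 1, by omega⟩
  unfold conjL
  rw [hM', decP_max ν, hM', Nat.add_sub_cancel, List.range_succ_eq_map, List.map_cons,
    List.map_map]
  congr 1
  · rw [List.countP_eq_length]
    intro a ha
    simp only [decide_eq_true_eq]
    have := hpos a ha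
    omega
  · refine List.map_congr_left ?_
    intro i _
    show ν.countP (fun p => decide (i + 1 + 1 ≤ p)) = (decP ν).countP (fun p => decide (i + 1 ≤ p))
    rw [decP_countP i ν]

lemma ov_replicate_decP : ∀ ν : List ℕ, ν.Pairwise (· ≥ ·) → (∀ p ∈ ν, 0 < p) →
    ov (List.replicate ν.length 1) (decP ν) = ν := by
  intro ν
  induction ν with
  | nil => intro _ _; rfl
  | cons p rest ih =>
    intro hsort hpos
    have hrs : rest.Pairwise (· ≥ ·) := (List.pairwise_cons.mp hsort).2
    have hrp : ∀ q ∈ rest, 0 < q := fun q hq => hpos q (by simp [hq])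
    by_cases h : 2 ≤ p
    · rw [decP_cons_of_le rest h, List.length_cons, List.replicate_succ]
      show (1 + (p - 1)) :: ov (List.replicate rest.length 1) (decP rest) = p :: rest
      rw [ih hrs hrp]
      congr 1
      omega
    · have hp1 : p = 1 := by have := hpos p (by simp); omega
      have hall : ∀ q ∈ (p :: rest), q = 1 := by
        intro q hq
        rcases List.mem_cons.mp hq with h' | h'
        · omega
        · have := (List.pairwise_cons.mp hsort).1 q h'
          have := hrp q h'
          omega
      have hdec : decP (p :: rest) = [] := by
        rw [decP, List.map_eq_nil_iff, List.filter_eq_nil_iff]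
        intro a ha
        have := hall a ha
        simp
        omega
      rw [hdec, ov_nil_right]
      exact (List.eq_replicate_of_mem hall).symm

lemma conj_fold : ∀ (N : ℕ) (ν : List ℕ), ν.sum ≤ N → ν.Pairwise (· ≥ ·) → (∀ p ∈ ν, 0 < p) →
    List.foldl shapeD [] (conjL ν) = ν := by
  intro N
  induction N with
  | zero =>
    intro ν hsum hsort hpos
    match ν with
    | [] => rfl
    | p :: rest =>
      exfalso
      have := hpos p (by simp)
      have : (p :: rest).sum = p + rest.sum := by simp
      omega
  | succ N ih =>
    intro ν hsum hsort hpos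
    match ν with
    | [] => rfl
    | p :: rest =>
      set μ := p :: rest with hμ
      have hne : μ ≠ [] := by simp [hμ]
      rw [conjL_cons μ hne hpos, List.foldl_cons]
      have h0 : shapeD [] μ.length = List.replicate μ.length 1 := shapeD_nil_eq _
      rw [h0, ← ov_nil_right (List.replicate μ.length 1)]
      have hbound : ∀ c ∈ conjL (decP μ), c ≤ (List.replicate μ.length 1).length := by
        intro c hc
        rw [List.length_replicate]
        rw [conjL] at hc
        obtain ⟨i, _, rfl⟩ := List.mem_map.mp hc
        calc (decP μ).countP _ ≤ (decP μ).length := List.countP_le_length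
          _ ≤ μ.length := by rw [decP, List.length_map]; exact List.length_filter_le _ _
      rw [foldl_shapeD_ov (conjL (decP μ)) _ [] hbound (by simp)]
      have hdsort : (decP μ).Pairwise (· ≥ ·) := by
        refine List.Pairwise.map _ ?_ (hsort.filter _)
        intro a b hab
        exact Nat.sub_le_sub_right hab 1
      have hdpos : ∀ q ∈ decP μ, 0 < q := by
        intro q hq
        rw [decP] at hq
        obtain ⟨a, ha, rfl⟩ := List.mem_map.mp hq
        have := List.of_mem_filter ha
        simp at this
        omega
      have hdsum : (decP μ).sum ≤ N := by
        have h := decP_sum_lt p rest (hpos p (by simp [hμ]))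
        rw [← hμ] at h
        omega
      rw [ih (decP μ) hdsum hdsort hdpos]
      exact ov_replicate_decP μ hsort hpos

/-- applying Robinson–Schensted to the longest element `σ_{ν*}` of the Young
subgroup `S_{ν*}` of `S_n` yields a pair of tableaux of common shape `ν`. -/
theorem RS_longest_young_conj (n : ℕ) (ν : List ℕ) (hsort : ν.Pairwise (· ≥ ·))
    (hpos : ∀ p ∈ ν, 0 < p) (hsum : ν.sum = n) :
    shape (RSP (blockRevWord (conjL ν) 0)) = ν ∧
    shape (RSQ (blockRevWord (conjL ν) 0)) = ν := by
  set w := blockRevWord (conjL ν) 0 with hw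
  have key : RSpair w = (appendCols [] 0 (conjL ν), appendCols [] 0 (conjL ν)) := by
    show (w.zip (List.range w.length)).foldl rsStep ([], []) = _
    rw [List.range_eq_range']
    exact outerFold (conjL ν) 0 [] (by intro r hr; simp at hr)
  have hshape : shape (appendCols [] 0 (conjL ν)) = ν := by
    rw [shape_appendCols]
    show List.foldl shapeD [] (conjL ν) = ν
    exact conj_fold ν.sum ν le_rfl hsort hpos
  constructor
  · rw [RSP, key]; exact hshape
  · rw [RSQ, key]; exact hshape
end

section
/- Let n ≥ 2, and let Γ be a totally ordered abelian group with elements a, b ∈ Γ satisfying b > (n−1)a > 0. For a bipartition (λ₁, λ₂) of n, define α(λ₁,λ₂) := b·|λ₂| + a·(n(λ₁) + 2n(λ₂*) − n(λ₂)). If (λ₁, λ₂) and (μ₁, μ₂) are bipartitions of n with |λ₂| = |μ₂| + 1, such that λ₁ is obtained from μ₁ by decreasing one part by 1 and λ₂ is obtained from μ₂ by increasing one part by 1, then α(λ₁,λ₂) > α(μ₁,μ₂). -/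
/-- `ν : ℕ → ℕ` (0-indexed parts) is a partition of `m`. -/
def IsPartitionOf (ν : ℕ → ℕ) (m : ℕ) : Prop :=
  (∀ i j, i ≤ j → ν j ≤ ν i) ∧ (∀ i, m ≤ i → ν i = 0) ∧ ∑ i ∈ Finset.range m, ν i = m

/-- The conjugate partition: `ν*^{(i+1)} = #{j : ν^{(j+1)} ≥ i+1}`. -/
noncomputable def conjP (ν : ℕ → ℕ) (i : ℕ) : ℕ :=
  Nat.card {j : ℕ | i + 1 ≤ ν j}

/-- `n(ν) = Σ_i (i-1)·ν^{(i)}`; with 0-indexed parts this is `Σ i·ν i`. -/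
def nInv (n : ℕ) (ν : ℕ → ℕ) : ℕ := ∑ i ∈ Finset.range n, i * ν i

/-- The invariant `α(λ₁,λ₂) = b·|λ₂| + a·(n(λ₁) + 2n(λ₂*) − n(λ₂))` of a bipartition,
where `s₂ = |λ₂|`. -/
noncomputable def alphaInv {Γ : Type*} [AddCommGroup Γ] [LinearOrder Γ] [IsOrderedAddMonoid Γ] (a b : Γ)
    (n s₂ : ℕ) (l1 l2 : ℕ → ℕ) : Γ :=
  s₂ • b + (nInv n l1 + 2 * nInv n (conjP l2)) • a - (nInv n l2) • a

/-- If `g` is obtained from `f` by increasing the part at index `p < n` by one,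
then `nInv n g = nInv n f + p`. -/
lemma nInv_succ (n : ℕ) (f g : ℕ → ℕ) (p : ℕ) (hp : p < n)
    (hgp : g p = f p + 1) (hothers : ∀ i, i ≠ p → g i = f i) :
    nInv n g = nInv n f + p := by
  unfold nInv
  rw [← Finset.sum_erase_add _ _ (Finset.mem_range.2 hp),
      ← Finset.sum_erase_add _ (fun i => i * f i) (Finset.mem_range.2 hp)]
  have hcong : ∀ i ∈ (Finset.range n).erase p, i * g i = i * f i := fun i hi => by
    rw [hothers i (Finset.ne_of_mem_erase hi)]
  rw [Finset.sum_congr rfl hcong, hgp]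
  ring

lemma conjP_eq_ncard (ν : ℕ → ℕ) (j : ℕ) : conjP ν j = {j' | j + 1 ≤ ν j'}.ncard := by
  rw [conjP, Nat.card_coe_set_eq]

/-- in the asymptotic case `b > (n−1)a > 0`, if the bipartition `(λ₁, λ₂)`
of `n` is obtained from `(μ₁, μ₂)` by moving one box from the first component to the
second (so `|λ₂| = |μ₂| + 1`, one part of `μ₁` decreases by `1` and one part of `μ₂`
increases by `1`), then `α(λ₁,λ₂) > α(μ₁,μ₂)`. -/
theorem alpha_strict_increase (n : ℕ) (hn : 2 ≤ n) (Γ : Type*)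
    [AddCommGroup Γ] [LinearOrder Γ] [IsOrderedAddMonoid Γ] (a b : Γ)
    (ha : 0 < (n - 1) • a) (hb : (n - 1) • a < b)
    (l1 l2 m1 m2 : ℕ → ℕ) (n1 n2 k1 k2 : ℕ)
    (h1 : IsPartitionOf l1 n1) (h2 : IsPartitionOf l2 n2) (hln : n1 + n2 = n)
    (h3 : IsPartitionOf m1 k1) (h4 : IsPartitionOf m2 k2) (hkn : k1 + k2 = n)
    (hsz : n2 = k2 + 1)
    (hdec : ∃ m, 0 < m1 m ∧ l1 m = m1 m - 1 ∧ ∀ i, i ≠ m → l1 i = m1 i)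
    (hinc : ∃ r, l2 r = m2 r + 1 ∧ ∀ i, i ≠ r → l2 i = m2 i) :
    alphaInv a b n k2 m1 m2 < alphaInv a b n n2 l1 l2 := by
  obtain ⟨m, hm0, hml, hmo⟩ := hdec
  obtain ⟨r, hrl, hro⟩ := hinc
  -- basic index bounds
  have hm1 : m1 m = l1 m + 1 := by omega
  have hmk : m < k1 := by
    by_contra h
    exact absurd (h3.2.1 m (not_lt.1 h)) (by omega)
  have hrn : r < n2 := by
    by_contra h
    have := h2.2.1 r (not_lt.1 h)
    omega
  have hmn : m < n := by omega
  have hrltn : r < n := by omega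
  -- the increased value of m2 is at most k2
  have hval : m2 r ≤ k2 := by
    rcases lt_or_ge r k2 with h | h
    · calc m2 r ≤ ∑ i ∈ Finset.range k2, m2 i :=
            Finset.single_le_sum (fun i _ => Nat.zero_le _) (Finset.mem_range.2 h)
        _ = k2 := h4.2.2
    · rw [h4.2.1 r h]; exact Nat.zero_le _
  have hvaln : m2 r < n := by omega
  -- nInv relations for l1/m1 and l2/m2
  have hA : nInv n m1 = nInv n l1 + m :=
    nInv_succ n l1 m1 m hmn hm1 (fun i hi => (hmo i hi).symm)
  have hC : nInv n l2 = nInv n m2 + r := nInv_succ n m2 l2 r hrltn hrl hro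
  -- conjugate partition relations
  have hfin : {j' | m2 r + 1 ≤ m2 j'}.Finite := by
    apply (Set.finite_Iio k2).subset
    intro j' hj'
    simp only [Set.mem_setOf_eq] at hj'
    by_contra h
    have := h4.2.1 j' (not_lt.1 h)
    omega
  have hconj_at : conjP l2 (m2 r) = conjP m2 (m2 r) + 1 := by
    rw [conjP_eq_ncard, conjP_eq_ncard]
    have hset : {j' | m2 r + 1 ≤ l2 j'} = insert r {j' | m2 r + 1 ≤ m2 j'} := by
      ext j'
      rcases eq_or_ne j' r with h | h
      · subst h
        simp [Set.mem_insert_iff, hrl]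
      · simp only [Set.mem_setOf_eq, Set.mem_insert_iff, hro j' h, h, false_or]
    rw [hset, Set.ncard_insert_of_notMem (by simp) hfin]
  have hconj_other : ∀ j, j ≠ m2 r → conjP l2 j = conjP m2 j := by
    intro j hj
    rw [conjP_eq_ncard, conjP_eq_ncard]
    congr 1
    ext j'
    rcases eq_or_ne j' r with h | h
    · subst h
      simp only [Set.mem_setOf_eq, hrl]
      omega
    · simp only [Set.mem_setOf_eq, hro j' h]
  have hB : nInv n (conjP l2) = nInv n (conjP m2) + m2 r :=
    nInv_succ n (conjP m2) (conjP l2) (m2 r) hvaln hconj_at hconj_other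
  -- the key inequality
  have hapos : 0 ≤ a := by
    by_contra h
    exact absurd ha (not_lt.2 (nsmul_nonpos (le_of_lt (not_le.1 h)) _))
  have hmr : m + r ≤ n - 1 := by omega
  have key : m • a + r • a < b + (2 * m2 r) • a := by
    calc m • a + r • a = (m + r) • a := (add_nsmul a m r).symm
      _ ≤ (n - 1) • a := nsmul_le_nsmul_left hapos hmr
      _ < b := hb
      _ ≤ b + (2 * m2 r) • a := le_add_of_nonneg_right (nsmul_nonneg hapos _)
  -- now unfold and compute
  unfold alphaInv
  rw [hA, hB, hC, hsz]
  have e1 : nInv n l1 + m + 2 * nInv n (conjP m2)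
      = (nInv n l1 + 2 * nInv n (conjP m2)) + m := by ring
  have e2 : nInv n l1 + 2 * (nInv n (conjP m2) + m2 r)
      = (nInv n l1 + 2 * nInv n (conjP m2)) + 2 * m2 r := by ring
  rw [e1, e2, add_nsmul _ (nInv n l1 + 2 * nInv n (conjP m2)) m,
      add_nsmul _ (nInv n l1 + 2 * nInv n (conjP m2)) (2 * m2 r),
      add_nsmul _ (nInv n m2) r, succ_nsmul b k2]
  set u := (nInv n l1 + 2 * nInv n (conjP m2)) • a
  set v := (nInv n m2) • a
  set z := k2 • b
  rw [sub_lt_sub_iff]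
  calc z + (u + m • a) + (v + r • a) = (m • a + r • a) + (z + u + v) := by abel
    _ < (b + (2 * m2 r) • a) + (z + u + v) := add_lt_add_left key _
    _ = z + b + (u + (2 * m2 r) • a) + v := by abel
end
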